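/- (Linear functional selection) Let X be a Polish space, Y ⊆ ℝ^n a Borel set, and f : X × Y → ℝ upper semi-analytic. Suppose there exists a : X → ℝ^n with f(x,y) ≤ a(x)·y for all x ∈ X, y ∈ Y. Then there exists a Borel measurable A : X → ℝ^n with f(x,y) ≤ A(x)·y for all x ∈ X, y ∈ Y. -/

import Mathlib

open MeasureTheory Set Function

section Novikov

variable {α : Type*} [TopologicalSpace α] [T2Space α] [MeasurableSpace α]
  [OpensMeasurableSpace α]

def SepFam {α : Type*} [MeasurableSpace α] (s : ℕ → Set α) : Prop :=
  ∃ B : ℕ → Set α, (∀ n, MeasurableSet (B n)) ∧ (∀ n, s n ⊆ B n) ∧ (⋂ n, B n) = ∅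

omit [TopologicalSpace α] [T2Space α] [OpensMeasurableSpace α] in
theorem sepFam_of_update_iUnion {s : ℕ → Set α} {n₀ : ℕ} {u : ℕ → Set α}
    (hs : s n₀ = ⋃ i, u i) (h : ∀ i, SepFam (Function.update s n₀ (u i))) : SepFam s := by
  choose B hBmeas hBsub hBempty using h
  refine ⟨fun m => if m = n₀ then ⋃ i, B i n₀ else ⋂ i, B i m, ?_, ?_, ?_⟩
  · intro m
    dsimp only
    by_cases hm : m = n₀
    · rw [if_pos hm]; exact MeasurableSet.iUnion fun i => hBmeas i n₀
    · rw [if_neg hm]; exact MeasurableSet.iInter fun i => hBmeas i m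
  · intro m
    dsimp only
    by_cases hm : m = n₀
    · rw [hm, if_pos rfl, hs]
      refine iUnion_subset fun i => subset_iUnion_of_subset i ?_
      have := hBsub i n₀
      simpa using this
    · rw [if_neg hm]
      refine subset_iInter fun i => ?_
      have := hBsub i m
      rwa [Function.update_of_ne hm] at this
  · ext z
    simp only [mem_iInter, mem_empty_iff_false, iff_false, not_forall]
    by_contra hz
    push_neg at hz
    have hzn₀ := hz n₀
    rw [if_pos rfl] at hzn₀
    obtain ⟨i₀, hi₀⟩ := mem_iUnion.1 hzn₀
    have : z ∈ ⋂ m, B i₀ m := by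
      refine mem_iInter.2 fun m => ?_
      by_cases hm : m = n₀
      · rw [hm]; exact hi₀
      · have := hz m
        rw [if_neg hm] at this
        exact (mem_iInter.1 this) i₀
    rw [hBempty i₀] at this
    exact this

/-- Novikov's countable separation theorem, core version for ranges. -/
theorem novikov_ranges (f : ℕ → (ℕ → ℕ) → α) (hf : ∀ n, Continuous (f n))
    (h : (⋂ n, range (f n)) = ∅) : SepFam (fun n => range (f n)) := by
  by_contra hfg
  have I : ∀ (len : ℕ → ℕ) (σ : ℕ → ℕ → ℕ) (n₀ : ℕ),
      ¬SepFam (fun n => f n '' PiNat.cylinder (σ n) (len n)) →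
      ∃ x', x' ∈ PiNat.cylinder (σ n₀) (len n₀) ∧
        ¬SepFam (fun n => f n '' PiNat.cylinder (Function.update σ n₀ x' n)
          (Function.update len n₀ (len n₀ + 1) n)) := by
    intro len σ n₀
    contrapose!
    intro H
    apply sepFam_of_update_iUnion (n₀ := n₀)
      (u := fun i => f n₀ '' PiNat.cylinder (Function.update (σ n₀) (len n₀) i) (len n₀ + 1))
    · rw [← PiNat.iUnion_cylinder_update (σ n₀) (len n₀), image_iUnion]
    · intro i
      have h1 := H (Function.update (σ n₀) (len n₀) i) (PiNat.update_mem_cylinder _ _ _)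
      have heq : (Function.update (fun n => f n '' PiNat.cylinder (σ n) (len n)) n₀
            (f n₀ '' PiNat.cylinder (Function.update (σ n₀) (len n₀) i) (len n₀ + 1)))
          = fun m => f m '' PiNat.cylinder
              (Function.update σ n₀ (Function.update (σ n₀) (len n₀) i) m)
              (Function.update len n₀ (len n₀ + 1) m) := by
        funext m
        by_cases hm : m = n₀
        · rw [hm, Function.update_self, Function.update_self, Function.update_self]
        · rw [Function.update_of_ne hm, Function.update_of_ne hm, Function.update_of_ne hm]
      rw [heq]
      exact h1
  let e : ℕ → ℕ := fun k => (Nat.unpair k).1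
  have he : ∀ n K, ∃ k ≥ K, e k = n := by
    intro n K
    exact ⟨Nat.pair n K, Nat.right_le_pair n K, by simp [e]⟩
  let A := {p : (ℕ → ℕ) × (ℕ → ℕ → ℕ) //
    ¬SepFam (fun n => f n '' PiNat.cylinder (p.2 n) (p.1 n))}
  have step : ∀ (k : ℕ) (p : A), ∃ q : A,
      q.1.1 = Function.update p.1.1 (e k) (p.1.1 (e k) + 1) ∧
      q.1.2 (e k) ∈ PiNat.cylinder (p.1.2 (e k)) (p.1.1 (e k)) ∧
      ∀ m, m ≠ e k → q.1.2 m = p.1.2 m := by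
    rintro k ⟨⟨len, σ⟩, hp⟩
    rcases I len σ (e k) hp with ⟨x', hx', h'⟩
    exact ⟨⟨⟨Function.update len (e k) (len (e k) + 1), Function.update σ (e k) x'⟩, h'⟩,
      rfl, by simpa using hx', fun m hm => Function.update_of_ne hm _ _⟩
  choose F hF1 hF2 hF3 using step
  have hp0 : ¬SepFam (fun n => f n ''
      PiNat.cylinder (((fun _ => 0, fun _ _ => 0) : (ℕ → ℕ) × (ℕ → ℕ → ℕ)).2 n)
        (((fun _ => 0, fun _ _ => 0) : (ℕ → ℕ) × (ℕ → ℕ → ℕ)).1 n)) := by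
    simpa [PiNat.cylinder] using hfg
  let p0 : A := ⟨⟨fun _ => 0, fun _ _ => 0⟩, hp0⟩
  let p : ℕ → A := fun k => Nat.rec p0 (fun k pk => F k pk) k
  have prec : ∀ k, p (k + 1) = F k (p k) := fun k => rfl
  set len : ℕ → ℕ → ℕ := fun k => (p k).1.1 with hlen
  set σ : ℕ → ℕ → ℕ → ℕ := fun k => (p k).1.2 with hσ
  have len_mono : ∀ n, Monotone fun k => len k n := by
    intro n
    apply monotone_nat_of_le_succ
    intro k
    have h1 := hF1 k (p k)
    rw [← prec] at h1
    by_cases hn : n = e k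
    · rw [hn]; simp only [hlen, h1, Function.update_self]; omega
    · simp only [hlen, h1, Function.update_of_ne hn]; exact le_refl _
  have len_unbounded : ∀ n L, ∃ K, L ≤ len K n := by
    intro n L
    induction L with
    | zero => exact ⟨0, Nat.zero_le _⟩
    | succ L ih =>
      obtain ⟨K, hK⟩ := ih
      obtain ⟨k, hkK, hek⟩ := he n K
      refine ⟨k + 1, ?_⟩
      have h1 := hF1 k (p k)
      rw [← prec] at h1
      have hstep : len (k+1) n = len k n + 1 := by
        simp only [hlen, h1, ← hek, Function.update_self]
      rw [hstep]
      have := len_mono n hkK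
      dsimp only at this
      omega
  have stat : ∀ n m K, m < len K n → ∀ K', K ≤ K' → σ K' n m = σ K n m := by
    intro n m K hm
    refine Nat.le_induction rfl ?_
    intro K'' hK'' ih
    have key : σ (K''+1) n m = σ K'' n m := by
      by_cases hn : n = e K''
      · have h2 := hF2 K'' (p K'')
        rw [← prec] at h2
        rw [hn]
        have hmlt : m < len K'' (e K'') := by
          rw [← hn]; exact lt_of_lt_of_le hm (len_mono n hK'')
        exact PiNat.mem_cylinder_iff.1 h2 m hmlt
      · have h3 := hF3 K'' (p K'')
        rw [← prec] at h3
        exact congrFun (h3 n hn) m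
    rw [key, ih]
  have hex : ∀ n m, ∃ K, m + 1 ≤ len K n := fun n m => len_unbounded n (m+1)
  let x : ℕ → ℕ → ℕ := fun n m => σ (hex n m).choose n m
  have hx : ∀ n m K, m < len K n → x n m = σ K n m := by
    intro n m K hm
    have h1 : m < len (hex n m).choose n := (hex n m).choose_spec
    have h2 : x n m = σ (max (hex n m).choose K) n m :=
      (stat n m _ h1 _ (le_max_left _ _)).symm
    rw [h2, stat n m K hm _ (le_max_right _ _)]
  have M : ∀ K, ¬SepFam (fun n => f n '' PiNat.cylinder (x n) (len K n)) := by
    intro K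
    have heq : (fun n => f n '' PiNat.cylinder (x n) (len K n))
        = fun n => f n '' PiNat.cylinder (σ K n) (len K n) := by
      funext n
      have hmem : σ K n ∈ PiNat.cylinder (x n) (len K n) :=
        PiNat.mem_cylinder_iff.2 fun i hi => (hx n i K hi).symm
      rw [← PiNat.mem_cylinder_iff_eq.1 hmem]
    rw [heq]
    exact (p K).2
  have hdist : ∃ n m, f n (x n) ≠ f m (x m) := by
    by_contra hc
    push_neg at hc
    have : f 0 (x 0) ∈ ⋂ n, range (f n) :=
      mem_iInter.2 fun n => (hc n 0) ▸ mem_range_self _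
    rw [h] at this
    exact this
  obtain ⟨n, m, hnm⟩ := hdist
  have hne : n ≠ m := fun hh => hnm (by rw [hh])
  obtain ⟨u, v, u_open, v_open, xu, yv, huv⟩ :
      ∃ u v : Set α, IsOpen u ∧ IsOpen v ∧ f n (x n) ∈ u ∧ f m (x m) ∈ v ∧ Disjoint u v :=
    t2_separation hnm
  letI : MetricSpace (ℕ → ℕ) := PiNat.metricSpaceNatNat
  obtain ⟨εx, εxpos, hεx⟩ : ∃ εx : ℝ, εx > 0 ∧ Metric.ball (x n) εx ⊆ f n ⁻¹' u :=
    Metric.mem_nhds_iff.1 ((hf n).continuousAt.preimage_mem_nhds (u_open.mem_nhds xu))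
  obtain ⟨εy, εypos, hεy⟩ : ∃ εy : ℝ, εy > 0 ∧ Metric.ball (x m) εy ⊆ f m ⁻¹' v :=
    Metric.mem_nhds_iff.1 ((hf m).continuousAt.preimage_mem_nhds (v_open.mem_nhds yv))
  obtain ⟨L, hL⟩ : ∃ L : ℕ, (1 / 2 : ℝ) ^ L < min εx εy :=
    exists_pow_lt_of_lt_one (lt_min εxpos εypos) (by norm_num)
  obtain ⟨K1, hK1⟩ := len_unbounded n L
  obtain ⟨K2, hK2⟩ := len_unbounded m L
  set K := max K1 K2 with hK
  have hlenn : L ≤ len K n := le_trans hK1 (len_mono n (le_max_left _ _))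
  have hlenm : L ≤ len K m := le_trans hK2 (len_mono m (le_max_right _ _))
  apply M K
  refine ⟨fun j => if j = n then u else if j = m then v else univ, ?_, ?_, ?_⟩
  · intro j
    dsimp only
    by_cases h1 : j = n
    · rw [if_pos h1]; exact u_open.measurableSet
    rw [if_neg h1]
    by_cases h2 : j = m
    · rw [if_pos h2]; exact v_open.measurableSet
    · rw [if_neg h2]; exact MeasurableSet.univ
  · intro j
    dsimp only
    by_cases h1 : j = n
    · rw [h1, if_pos rfl, image_subset_iff]
      refine Subset.trans (fun z hz => ?_ : PiNat.cylinder (x n) (len K n) ⊆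
        Metric.ball (x n) εx) hεx
      rw [PiNat.mem_cylinder_iff_dist_le] at hz
      have hz2 : dist z (x n) ≤ (1/2 : ℝ)^L := by
        refine le_trans hz ?_
        apply pow_le_pow_of_le_one (by norm_num) (by norm_num) hlenn
      calc dist z (x n) ≤ (1/2 : ℝ)^L := hz2
        _ < min εx εy := hL
        _ ≤ εx := min_le_left _ _
    by_cases h2 : j = m
    · rw [if_neg h1, h2, if_pos rfl, image_subset_iff]
      refine Subset.trans (fun z hz => ?_ : PiNat.cylinder (x m) (len K m) ⊆
        Metric.ball (x m) εy) hεy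
      rw [PiNat.mem_cylinder_iff_dist_le] at hz
      have hz2 : dist z (x m) ≤ (1/2 : ℝ)^L := by
        refine le_trans hz ?_
        apply pow_le_pow_of_le_one (by norm_num) (by norm_num) hlenm
      calc dist z (x m) ≤ (1/2 : ℝ)^L := hz2
        _ < min εx εy := hL
        _ ≤ εy := min_le_right _ _
    · rw [if_neg h1, if_neg h2]; exact subset_univ _
  · ext z
    simp only [mem_iInter, mem_empty_iff_false, iff_false, not_forall]
    by_contra hz
    push_neg at hz
    have h1 := hz n
    have h2 := hz m
    rw [if_pos rfl] at h1
    rw [if_neg (Ne.symm hne), if_pos rfl] at h2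
    exact (disjoint_left.1 huv) h1 h2

/-- Novikov's countable separation theorem. -/
theorem AnalyticSet.countable_separation {A : ℕ → Set α} (hA : ∀ n, AnalyticSet (A n))
    (h : (⋂ n, A n) = ∅) :
    ∃ B : ℕ → Set α, (∀ n, MeasurableSet (B n)) ∧ (∀ n, A n ⊆ B n) ∧ (⋂ n, B n) = ∅ := by
  by_cases hne : ∀ n, (A n).Nonempty
  · have hex : ∀ n, ∃ g : (ℕ → ℕ) → α, Continuous g ∧ range g = A n := by
      intro n
      have := hA n
      rw [AnalyticSet] at this
      rcases this with h0 | ⟨g, hg, hgr⟩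
      · exact absurd h0 (hne n).ne_empty
      · exact ⟨g, hg, hgr⟩
    choose g hgc hgr using hex
    have hsep : SepFam (fun n => range (g n)) := by
      apply novikov_ranges g hgc
      have : (⋂ n, range (g n)) = ⋂ n, A n := iInter_congr hgr
      rw [this, h]
    obtain ⟨B, h1, h2, h3⟩ := hsep
    refine ⟨B, h1, fun n => ?_, h3⟩
    rw [← hgr n]; exact h2 n
  · push_neg at hne
    obtain ⟨n₀, hn₀⟩ := hne
    refine ⟨fun m => if m = n₀ then ∅ else univ, fun m => ?_, fun m => ?_, ?_⟩
    · by_cases hm : m = n₀ <;> simp [hm]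
    · by_cases hm : m = n₀ <;> simp [hm, hn₀]
    · ext z; simp only [mem_iInter, mem_empty_iff_false, iff_false, not_forall]
      exact ⟨n₀, by simp⟩

end Novikov
section Toolkit

instance polishAux {X : Type*} [TopologicalSpace X] [PolishSpace X] {k m : ℕ} :
    PolishSpace (X × (Fin k → (Fin m → ℝ) × ℝ)) := inferInstance

theorem MeasureTheory.AnalyticSet.inter' {α : Type*} [TopologicalSpace α] [T2Space α]
    {s t : Set α} (hs : AnalyticSet s) (ht : AnalyticSet t) : AnalyticSet (s ∩ t) := by
  have : s ∩ t = ⋂ b : Bool, (if b then s else t) := by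
    ext z; simp only [mem_inter_iff, mem_iInter, Bool.forall_bool, if_true, if_false]
    tauto
  rw [this]
  exact AnalyticSet.iInter fun b => by cases b <;> simpa

theorem MeasureTheory.AnalyticSet.prod_univ {α : Type*} [TopologicalSpace α] {β : Type}
    [TopologicalSpace β] [PolishSpace β] {s : Set α} (hs : AnalyticSet s) :
    AnalyticSet (s ×ˢ (univ : Set β)) := by
  rcases analyticSet_iff_exists_polishSpace_range.1 hs with ⟨γ, γtop, γpol, g, gcont, rfl⟩
  rw [analyticSet_iff_exists_polishSpace_range]
  refine ⟨γ × β, inferInstance, inferInstance, fun p => (g p.1, p.2),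
    (gcont.comp continuous_fst).prodMk continuous_snd, ?_⟩
  ext ⟨u, v⟩
  simp only [Set.mem_range, Set.mem_prod, Set.mem_univ, and_true, Prod.exists]
  constructor
  · rintro ⟨c, b, hcb⟩
    obtain ⟨h1, h2⟩ := Prod.ext_iff.1 hcb
    exact ⟨c, h1⟩
  · rintro ⟨c, rfl⟩
    exact ⟨c, v, rfl⟩

end Toolkit

namespace LFS

open MeasureTheory

variable {X : Type*} [TopologicalSpace X] [PolishSpace X] [MeasurableSpace X] [BorelSpace X]
variable {n : ℕ}

/-- dot product -/
def dot (v y : Fin n → ℝ) : ℝ := ∑ i, v i * y i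

theorem continuous_dot : Continuous (fun p : (Fin n → ℝ) × (Fin n → ℝ) => dot p.1 p.2) := by
  unfold dot
  exact continuous_finset_sum _ fun i _ =>
    ((continuous_apply i).comp continuous_fst).mul ((continuous_apply i).comp continuous_snd)

/-- The analytic set of constraints. -/
def TT (Y : Set (Fin n → ℝ)) (f : X → (Fin n → ℝ) → ℝ) : Set (X × ((Fin n → ℝ) × ℝ)) :=
  {p | p.2.1 ∈ Y ∧ p.2.2 < f p.1 p.2.1}

/-- feasibility of a vector at x -/
def inC (Y : Set (Fin n → ℝ)) (f : X → (Fin n → ℝ) → ℝ) (x : X) (v : Fin n → ℝ) : Prop :=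
  ∀ z : (Fin n → ℝ) × ℝ, (x, z) ∈ TT Y f → z.2 ≤ dot v z.1

theorem TT_analytic (Y : Set (Fin n → ℝ)) (f : X → (Fin n → ℝ) → ℝ)
    (husa : ∀ γ : ℝ, AnalyticSet {p : X × (Fin n → ℝ) | p.2 ∈ Y ∧ γ < f p.1 p.2}) :
    AnalyticSet (TT Y f) := by
  have heq : TT Y f = ⋃ q : ℚ, ((fun r : (X × (Fin n → ℝ)) × ℝ => (r.1.1, (r.1.2, r.2))) ''
      (({p : X × (Fin n → ℝ) | p.2 ∈ Y ∧ (q : ℝ) < f p.1 p.2} ×ˢ (univ : Set ℝ))) ∩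
      {p : X × ((Fin n → ℝ) × ℝ) | p.2.2 < (q : ℝ)}) := by
    ext p
    obtain ⟨x, y, γ⟩ := p
    constructor
    · rintro ⟨hy, hγ⟩
      obtain ⟨q, hq1, hq2⟩ := exists_rat_btwn hγ
      refine mem_iUnion.2 ⟨q, mem_inter ?_ hq1⟩
      have hmem : ((⟨x, y⟩, γ) : (X × (Fin n → ℝ)) × ℝ) ∈
          ({p : X × (Fin n → ℝ) | p.2 ∈ Y ∧ (q : ℝ) < f p.1 p.2} ×ˢ (univ : Set ℝ)) :=
        ⟨⟨hy, hq2⟩, mem_univ γ⟩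
      exact mem_image_of_mem _ hmem
    · intro hp
      obtain ⟨q, hq⟩ := mem_iUnion.1 hp
      obtain ⟨himg, hlt⟩ := hq
      obtain ⟨r, hr, hreq⟩ := himg
      obtain ⟨hrS, -⟩ := mem_prod.1 hr
      have hx : r.1.1 = x := congrArg Prod.fst hreq
      have hy2 : r.1.2 = y := congrArg (fun p => p.2.1) hreq
      obtain ⟨hrY, hrf⟩ := hrS
      rw [hx, hy2] at hrf
      rw [hy2] at hrY
      exact ⟨hrY, lt_trans hlt hrf⟩
  rw [heq]
  refine AnalyticSet.iUnion fun q => AnalyticSet.inter' ?_ ?_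
  · exact ((husa q).prod_univ).image_of_continuous
      ((continuous_fst.comp continuous_fst).prodMk
        ((continuous_snd.comp continuous_fst).prodMk continuous_snd))
  · have : IsOpen {p : X × ((Fin n → ℝ) × ℝ) | p.2.2 < (q : ℝ)} :=
      isOpen_lt (continuous_snd.comp continuous_snd) continuous_const
    exact this.measurableSet.analyticSet

/-- the "bad" set of points where no feasible vector lies in K -/
def BadSet (Y : Set (Fin n → ℝ)) (f : X → (Fin n → ℝ) → ℝ) (K : Set (Fin n → ℝ)) : Set X :=
  {x | ∀ v ∈ K, ∃ z : (Fin n → ℝ) × ℝ, (x, z) ∈ TT Y f ∧ dot v z.1 < z.2}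

theorem not_mem_badSet_iff {Y : Set (Fin n → ℝ)} {f : X → (Fin n → ℝ) → ℝ}
    {K : Set (Fin n → ℝ)} {x : X} : x ∉ BadSet Y f K ↔ ∃ v ∈ K, inC Y f x v := by
  simp only [BadSet, mem_setOf_eq, not_forall, inC]
  constructor
  · rintro ⟨v, hvK, hv⟩
    push_neg at hv
    exact ⟨v, hvK, fun z hz => hv z hz⟩
  · rintro ⟨v, hvK, hv⟩
    refine ⟨v, hvK, ?_⟩
    push_neg
    exact fun z hz => hv z hz

theorem badSet_analytic (Y : Set (Fin n → ℝ)) (f : X → (Fin n → ℝ) → ℝ)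
    (hT : AnalyticSet (TT Y f)) {K : Set (Fin n → ℝ)} (hK : IsCompact K) :
    AnalyticSet (BadSet Y f K) := by
  classical
  by_cases hKe : K = ∅
  · have : BadSet Y f K = univ := by
      ext x; simp [BadSet, hKe]
    rw [this]
    exact MeasurableSet.univ.analyticSet
  obtain ⟨w₀, hw₀⟩ := nonempty_iff_ne_empty.2 hKe
  let V : (k : ℕ) → Set (X × (Fin (k+1) → (Fin n → ℝ) × ℝ)) := fun k =>
    {q | (∀ i, (q.1, q.2 i) ∈ TT Y f) ∧ ∀ v ∈ K, ∃ i, dot v (q.2 i).1 < (q.2 i).2}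
  have hVan : ∀ k, AnalyticSet (V k) := by
    intro k
    have h1 : AnalyticSet (⋂ i : Fin (k+1),
        {q : X × (Fin (k+1) → (Fin n → ℝ) × ℝ) | (q.1, q.2 i) ∈ TT Y f}) := by
      refine AnalyticSet.iInter fun i => ?_
      have himg : {q : X × (Fin (k+1) → (Fin n → ℝ) × ℝ) | (q.1, q.2 i) ∈ TT Y f} =
          (fun r : (X × ((Fin n → ℝ) × ℝ)) × (Fin (k+1) → (Fin n → ℝ) × ℝ) =>
            (r.1.1, Function.update r.2 i r.1.2)) ''
            ((TT Y f) ×ˢ (univ : Set (Fin (k+1) → (Fin n → ℝ) × ℝ))) := by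
        ext ⟨x, g⟩
        constructor
        · intro hq
          exact ⟨⟨(x, g i), g⟩, ⟨hq, mem_univ _⟩, by simp⟩
        · rintro ⟨⟨⟨x', w'⟩, g'⟩, ⟨hq, -⟩, heq⟩
          obtain ⟨h1, h2⟩ := Prod.ext_iff.1 heq
          simp only at h1 h2
          subst h1
          rw [mem_setOf_eq, ← h2]
          simpa using hq
      rw [himg]
      exact (hT.prod_univ).image_of_continuous
        ((continuous_fst.comp continuous_fst).prodMk
          (continuous_snd.update i (continuous_snd.comp continuous_fst)))
    have h2 : IsOpen {g : Fin (k+1) → (Fin n → ℝ) × ℝ |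
        ∀ v ∈ K, ∃ i, dot v (g i).1 < (g i).2} := by
      rw [isOpen_iff_mem_nhds]
      intro g₀ hg₀
      have hΩ : IsOpen {vg : (Fin n → ℝ) × (Fin (k+1) → (Fin n → ℝ) × ℝ) | ∃ i,
          dot vg.1 (vg.2 i).1 < (vg.2 i).2} := by
        have heq2 : {vg : (Fin n → ℝ) × (Fin (k+1) → (Fin n → ℝ) × ℝ) | ∃ i,
            dot vg.1 (vg.2 i).1 < (vg.2 i).2} =
            ⋃ i, {vg : (Fin n → ℝ) × (Fin (k+1) → (Fin n → ℝ) × ℝ) |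
              dot vg.1 (vg.2 i).1 < (vg.2 i).2} := by
          ext vg; simp
        rw [heq2]
        refine isOpen_iUnion fun i => isOpen_lt ?_ ?_
        · exact continuous_dot.comp (continuous_fst.prodMk
            (continuous_fst.comp ((continuous_apply i).comp continuous_snd)))
        · exact continuous_snd.comp ((continuous_apply i).comp continuous_snd)
      have hsub : K ×ˢ ({g₀} : Set (Fin (k+1) → (Fin n → ℝ) × ℝ)) ⊆
          {vg | ∃ i, dot vg.1 (vg.2 i).1 < (vg.2 i).2} := by
        rintro ⟨v, g⟩ ⟨hv, hg⟩
        obtain rfl : g = g₀ := hg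
        exact hg₀ v hv
      obtain ⟨U', V', hU'o, hV'o, hKU', hgV', hUV⟩ :=
        generalized_tube_lemma hK isCompact_singleton hΩ hsub
      refine Filter.mem_of_superset (hV'o.mem_nhds (hgV' rfl)) ?_
      intro g hg v hv
      exact hUV (show ((v, g) : (Fin n → ℝ) × (Fin (k+1) → (Fin n → ℝ) × ℝ)) ∈ U' ×ˢ V' from
        ⟨hKU' hv, hg⟩)
    have h2' : AnalyticSet {q : X × (Fin (k+1) → (Fin n → ℝ) × ℝ) | ∀ v ∈ K, ∃ i,
        dot v (q.2 i).1 < (q.2 i).2} :=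
      ((h2.preimage continuous_snd).measurableSet).analyticSet
    have hVeq : V k = (⋂ i : Fin (k+1),
        {q : X × (Fin (k+1) → (Fin n → ℝ) × ℝ) | (q.1, q.2 i) ∈ TT Y f}) ∩
        {q : X × (Fin (k+1) → (Fin n → ℝ) × ℝ) | ∀ v ∈ K, ∃ i,
          dot v (q.2 i).1 < (q.2 i).2} := by
      ext q
      simp only [V, mem_setOf_eq, mem_inter_iff, mem_iInter]
    rw [hVeq]
    exact h1.inter' h2'
  have hcover : BadSet Y f K = ⋃ k, Prod.fst '' (V k) := by
    ext x
    constructor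
    · intro hx
      have hv : ∀ v : K, ∃ z : (Fin n → ℝ) × ℝ, (x, z) ∈ TT Y f ∧ dot v.1 z.1 < z.2 :=
        fun v => hx v.1 v.2
      choose ζ hζ1 hζ2 using hv
      have hcov : K ⊆ ⋃ v : K, {w : Fin n → ℝ | dot w (ζ v).1 < (ζ v).2} := by
        intro w hw
        exact mem_iUnion.2 ⟨⟨w, hw⟩, hζ2 ⟨w, hw⟩⟩
      obtain ⟨t, ht⟩ := hK.elim_finite_subcover (fun v : K =>
        {w : Fin n → ℝ | dot w (ζ v).1 < (ζ v).2}) (fun v =>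
        isOpen_lt (continuous_dot.comp (continuous_id.prodMk continuous_const))
          continuous_const) hcov
      set L := t.toList with hL
      let elem : ℕ → K := fun j => if h : j < L.length then L.get ⟨j, h⟩ else ⟨w₀, hw₀⟩
      refine mem_iUnion.2 ⟨L.length, ?_⟩
      refine (Set.mem_image _ _ _).2 ⟨⟨x, fun i : Fin (L.length + 1) => ζ (elem ↑i)⟩, ⟨?_, ?_⟩, rfl⟩
      · intro i
        exact hζ1 (elem i)
      · intro v hv
        have := ht hv
        obtain ⟨v', hv'⟩ := mem_iUnion.1 this
        obtain ⟨hv't, hvU⟩ := mem_iUnion.1 hv'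
        obtain ⟨jfin, hget⟩ := List.mem_iff_get.1 (Finset.mem_toList.2 hv't)
        refine ⟨⟨jfin.1, lt_trans jfin.2 (Nat.lt_succ_self _)⟩, ?_⟩
        have helem : elem jfin.1 = v' := by
          simp only [elem, dif_pos jfin.2]
          exact (dif_pos jfin.2).trans hget
        simp only [helem]
        exact hvU
    · intro hx
      obtain ⟨k, hk⟩ := mem_iUnion.1 hx
      obtain ⟨q, hq, hq1⟩ := hk
      intro v hv
      obtain ⟨i, hi⟩ := hq.2 v hv
      exact ⟨q.2 i, by rw [← hq1]; exact hq.1 i, hi⟩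
  rw [hcover]
  exact AnalyticSet.iUnion fun k => (hVan k).image_of_continuous continuous_fst

end LFS
namespace LFS

variable {X : Type*} [TopologicalSpace X] [PolishSpace X] [MeasurableSpace X] [BorelSpace X]
variable {n : ℕ}

theorem listInter_analytic {ι : Type*} (A : ι → Set X) (hA : ∀ i, AnalyticSet (A i)) :
    ∀ L : List ι, AnalyticSet (L.foldr (fun j s => A j ∩ s) univ)
  | [] => MeasurableSet.univ.analyticSet
  | (j :: L') => (hA j).inter' (listInter_analytic A hA L')

theorem mem_listInter {ι : Type*} {A : ι → Set X} {x : X} :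
    ∀ {L : List ι}, x ∈ L.foldr (fun j s => A j ∩ s) univ ↔ ∀ j ∈ L, x ∈ A j
  | [] => by simp
  | (j :: L') => by
    simp only [List.foldr_cons, mem_inter_iff, List.mem_cons]
    rw [mem_listInter]
    constructor
    · rintro ⟨h1, h2⟩ j' (rfl | hj')
      · exact h1
      · exact h2 j' hj'
    · intro h
      exact ⟨h j (Or.inl rfl), fun j' hj' => h j' (Or.inr hj')⟩

theorem finite_reduction {ι : Type*} [Inhabited ι] :
    ∀ (L : List ι) (P : Set X), MeasurableSet P → ∀ (A : ι → Set X),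
    (∀ i, AnalyticSet (A i)) → (∀ x ∈ P, ∃ i ∈ L, x ∉ A i) →
    ∃ σ : X → ι, (∀ i, MeasurableSet (σ ⁻¹' {i})) ∧ ∀ x ∈ P, x ∉ A (σ x) := by
  classical
  intro L
  induction L with
  | nil =>
    intro P hP A hA hcov
    refine ⟨fun _ => default, fun i => ?_, fun x hx => ?_⟩
    · by_cases h : (default : ι) = i
      · have : (fun _ : X => default) ⁻¹' {i} = univ := by
          ext z; simp [h]
        rw [this]; exact MeasurableSet.univ
      · have : (fun _ : X => default) ⁻¹' {i} = ∅ := by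
          ext z; simp [h]
        rw [this]; exact MeasurableSet.empty
    · obtain ⟨i, hi, -⟩ := hcov x hx
      exact absurd hi List.not_mem_nil
  | cons i L' ih =>
    intro P hP A hA hcov
    set D := L'.foldr (fun j s => A j ∩ s) univ with hD
    have hDan : AnalyticSet (D ∩ P) := (listInter_analytic A hA L').inter' hP.analyticSet
    have hAiP : AnalyticSet (A i ∩ P) := (hA i).inter' hP.analyticSet
    have hdisj : Disjoint (A i ∩ P) (D ∩ P) := by
      rw [disjoint_left]
      rintro x ⟨hxA, hxP⟩ ⟨hxD, -⟩
      obtain ⟨j, hjL, hxj⟩ := hcov x hxP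
      rcases List.mem_cons.1 hjL with rfl | hj'
      · exact hxj hxA
      · exact hxj (mem_listInter.1 hxD j hj')
    obtain ⟨M, hM1, hM2, hM3⟩ := AnalyticSet.measurablySeparable hAiP hDan hdisj
    have hcov' : ∀ x ∈ P ∩ M, ∃ j ∈ L', x ∉ A j := by
      rintro x ⟨hxP, hxM⟩
      by_contra hc
      push_neg at hc
      have hxD : x ∈ D := mem_listInter.2 hc
      exact (disjoint_left.1 hM2) ⟨hxD, hxP⟩ hxM
    obtain ⟨σ', hσ'm, hσ'p⟩ := ih (P ∩ M) (hP.inter hM3) A hA hcov'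
    refine ⟨fun x => if x ∈ M then σ' x else i, fun s => ?_, fun x hx => ?_⟩
    · have : (fun x => if x ∈ M then σ' x else i) ⁻¹' {s} =
          (M ∩ σ' ⁻¹' {s}) ∪ (if i = s then Mᶜ else ∅) := by
        ext z
        by_cases hz : z ∈ M <;> by_cases his : i = s <;>
          simp [hz, his, mem_preimage, mem_singleton_iff]
      rw [this]
      refine (hM3.inter (hσ'm s)).union ?_
      by_cases his : i = s
      · rw [if_pos his]; exact hM3.compl
      · rw [if_neg his]; exact MeasurableSet.empty
    · show x ∉ A (if x ∈ M then σ' x else i)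
      by_cases hxM : x ∈ M
      · rw [if_pos hxM]
        exact hσ'p x ⟨hx, hxM⟩
      · rw [if_neg hxM]
        intro hxA
        exact hxM (hM1 ⟨hxA, hx⟩)

/-- closed box -/
def box (c : Fin n → ℝ) (r : ℝ) : Set (Fin n → ℝ) := {v | ∀ i, |v i - c i| ≤ r}

theorem box_compact (c : Fin n → ℝ) (r : ℝ) : IsCompact (box c r) := by
  have : box c r = Set.pi univ (fun i => Icc (c i - r) (c i + r)) := by
    ext v
    simp only [box, mem_setOf_eq, mem_pi, mem_univ, forall_true_left, mem_Icc, true_implies]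
    constructor
    · intro h i
      have := abs_le.1 (h i)
      constructor <;> linarith [this.1, this.2]
    · intro h i
      rw [abs_le]
      constructor <;> linarith [(h i).1, (h i).2]
  rw [this]
  exact isCompact_univ_pi fun i => isCompact_Icc

end LFS

open LFS Filter

/-- Linear functional selection: a pointwise linear domination of an upper
semi-analytic function can be chosen Borel measurably (and linear). -/
theorem linear_functional_selection {X : Type*} [TopologicalSpace X] [PolishSpace X]
    [MeasurableSpace X] [BorelSpace X]
    {n : ℕ} (Y : Set (Fin n → ℝ)) (hY : MeasurableSet Y)
    (f : X → (Fin n → ℝ) → ℝ)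
    (husa : ∀ γ : ℝ, AnalyticSet {p : X × (Fin n → ℝ) | p.2 ∈ Y ∧ γ < f p.1 p.2})
    (a : X → Fin n → ℝ)
    (hdom : ∀ x, ∀ y ∈ Y, f x y ≤ ∑ i, a x i * y i) :
    ∃ A : X → Fin n → ℝ, Measurable A ∧
      ∀ x, ∀ y ∈ Y, f x y ≤ ∑ i, A x i * y i := by
  classical
  have hT : AnalyticSet (TT Y f) := TT_analytic Y f husa
  have hfeas : ∀ x, inC Y f x (a x) := by
    rintro x z ⟨hzY, hzlt⟩
    exact le_trans (le_of_lt hzlt) (hdom x z.1 hzY)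
  -- Step 1: Borel bound via Novikov separation
  have hFan : ∀ m : ℕ, AnalyticSet (BadSet Y f (box (0 : Fin n → ℝ) (m : ℝ))) :=
    fun m => badSet_analytic Y f hT (box_compact _ _)
  have hFempty : (⋂ m : ℕ, BadSet Y f (box (0 : Fin n → ℝ) (m : ℝ))) = ∅ := by
    ext x
    simp only [mem_iInter, mem_empty_iff_false, iff_false, not_forall]
    obtain ⟨m, hm⟩ := exists_nat_ge (∑ i, |a x i|)
    refine ⟨m, ?_⟩
    refine not_mem_badSet_iff.2 ⟨a x, ?_, hfeas x⟩
    intro i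
    have h1 : |a x i| ≤ ∑ j, |a x j| :=
      Finset.single_le_sum (fun j _ => abs_nonneg (a x j)) (Finset.mem_univ i)
    simpa using le_trans h1 hm
  obtain ⟨B, hBmeas, hBsub, hBempty⟩ := AnalyticSet.countable_separation hFan hFempty
  have hBfind : ∀ x, ∃ m, x ∉ B m := by
    intro x
    by_contra hc
    push_neg at hc
    have : x ∈ ⋂ m, B m := mem_iInter.2 hc
    rw [hBempty] at this
    exact this
  let mfun : X → ℕ := fun x => Nat.find (hBfind x)
  have hmfun_meas : Measurable mfun :=
    measurable_find hBfind fun k => (hBmeas k).compl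
  have hmfun_good : ∀ x, ∃ v, inC Y f x v ∧ ∀ i, |v i - 0| ≤ (mfun x : ℝ) := by
    intro x
    have hnot : x ∉ BadSet Y f (box 0 (mfun x : ℝ)) :=
      fun hmem => (Nat.find_spec (hBfind x)) (hBsub _ hmem)
    obtain ⟨v, hvbox, hvC⟩ := not_mem_badSet_iff.1 hnot
    exact ⟨v, hvC, hvbox⟩
  -- Step 2: the dyadic refinement
  let Good : ℕ → (X → Fin n → ℝ) → Prop := fun k c =>
    Measurable c ∧ (range c).Countable ∧
    ∀ x, ∃ v, inC Y f x v ∧ ∀ i, |v i - c x i| ≤ (mfun x : ℝ) / 2 ^ k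
  have hGood0 : Good 0 (fun _ _ => 0) := by
    refine ⟨measurable_const, Set.Countable.mono (range_const_subset) (countable_singleton _), ?_⟩
    intro x
    obtain ⟨v, h1, h2⟩ := hmfun_good x
    exact ⟨v, h1, fun i => by simpa using h2 i⟩
  have hstep : ∀ (k : ℕ) (c : X → Fin n → ℝ), Good k c →
      ∃ c', Good (k+1) c' ∧ ∀ x i, |c' x i - c x i| ≤ (mfun x : ℝ) / 2 ^ (k+1) := by
    rintro k c ⟨hcm, hcc, hcg⟩
    have hδpos : ∀ j : ℕ, (0:ℝ) ≤ (j:ℝ) / 2 ^ (k+1) := fun j =>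
      div_nonneg (Nat.cast_nonneg j) (by positivity)
    let child : (Fin n → ℝ) → ℕ → (Fin n → Bool) → (Fin n → ℝ) := fun w j s i =>
      if s i then w i + (j:ℝ)/2^(k+1) else w i - (j:ℝ)/2^(k+1)
    have hpiece : ∀ (w : Fin n → ℝ) (j : ℕ), ∃ σ : X → (Fin n → Bool),
        (∀ s, MeasurableSet (σ ⁻¹' {s})) ∧
        ∀ x ∈ (c ⁻¹' {w}) ∩ (mfun ⁻¹' {j}),
          x ∉ BadSet Y f (box (child w j (σ x)) ((j:ℝ)/2^(k+1))) := by
      intro w j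
      have hPmeas : MeasurableSet ((c ⁻¹' {w}) ∩ (mfun ⁻¹' {j})) :=
        (hcm (measurableSet_singleton w)).inter (hmfun_meas (measurableSet_singleton j))
      refine finite_reduction (Finset.univ.toList) _ hPmeas
        (fun s => BadSet Y f (box (child w j s) ((j:ℝ)/2^(k+1))))
        (fun s => badSet_analytic Y f hT (box_compact _ _)) ?_
      rintro x ⟨hxc, hxm⟩
      obtain ⟨v, hvC, hvclose⟩ := hcg x
      have hcx : c x = w := hxc
      have hmx : mfun x = j := hxm
      rw [hcx, hmx] at hvclose
      set s : Fin n → Bool := fun i => decide (w i ≤ v i) with hs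
      refine ⟨s, Finset.mem_toList.2 (Finset.mem_univ s), ?_⟩
      refine not_mem_badSet_iff.2 ⟨v, ?_, hvC⟩
      intro i
      have hv := hvclose i
      have h2k : (j:ℝ)/2^k = 2 * ((j:ℝ)/2^(k+1)) := by
        rw [pow_succ]; ring
      rw [h2k, abs_le] at hv
      by_cases hwv : w i ≤ v i
      · have hsi : s i = true := by simp [hs, hwv]
        have hchild : child w j s i = w i + (j:ℝ)/2^(k+1) := by
          simp [child, hsi]
        rw [hchild, abs_le]
        constructor <;> linarith [hv.1, hv.2, hδpos j]
      · have hsi : s i = false := by simp [hs, hwv]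
        have hchild : child w j s i = w i - (j:ℝ)/2^(k+1) := by
          simp [child, hsi]
        rw [hchild, abs_le]
        push_neg at hwv
        constructor <;> linarith [hv.1, hv.2, hδpos j]
    choose σfun hσmeas hσprop using hpiece
    let τ : X → Fin n → Bool := fun x => σfun (c x) (mfun x) x
    let c' : X → Fin n → ℝ := fun x => child (c x) (mfun x) (τ x)
    have hτset : ∀ s : Fin n → Bool, MeasurableSet {x | τ x = s} := by
      intro s
      have heq : {x | τ x = s} =
          ⋃ w ∈ range c, ⋃ j : ℕ, ((c ⁻¹' {w}) ∩ (mfun ⁻¹' {j}) ∩ (σfun w j ⁻¹' {s})) := by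
        ext x
        simp only [mem_setOf_eq, mem_iUnion, mem_inter_iff, mem_preimage, mem_singleton_iff]
        constructor
        · intro hx
          exact ⟨c x, mem_range_self x, mfun x, ⟨⟨rfl, rfl⟩, hx⟩⟩
        · rintro ⟨w, -, j, ⟨⟨hw, hj⟩, hx⟩⟩
          rw [← hw, ← hj] at hx
          exact hx
      rw [heq]
      refine MeasurableSet.biUnion hcc fun w _ => MeasurableSet.iUnion fun j => ?_
      exact ((hcm (measurableSet_singleton w)).inter
        (hmfun_meas (measurableSet_singleton j))).inter (hσmeas w j s)
    have hc'm : Measurable c' := by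
      rw [measurable_pi_iff]
      intro i
      have heq : (fun x => c' x i) = fun x =>
          if τ x i = true then c x i + (mfun x : ℝ)/2^(k+1) else c x i - (mfun x : ℝ)/2^(k+1) := by
        funext x
        simp only [c', child]
      rw [heq]
      have hcondmeas : MeasurableSet {x | τ x i = true} := by
        have : {x | τ x i = true} = ⋃ s ∈ {s : Fin n → Bool | s i = true}, {x | τ x = s} := by
          ext x
          simp only [mem_setOf_eq, mem_iUnion]
          constructor
          · intro hx
            exact ⟨τ x, hx, rfl⟩
          · rintro ⟨s, hs, rfl⟩
            exact hs
        rw [this]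
        exact MeasurableSet.biUnion (Set.to_countable _) fun s _ => hτset s
      have hm1 : Measurable fun x => (mfun x : ℝ)/2^(k+1) :=
        (measurable_from_top.comp hmfun_meas).div_const _
      have hm2 : Measurable fun x => c x i := (measurable_pi_apply i).comp hcm
      exact Measurable.ite hcondmeas (hm2.add hm1) (hm2.sub hm1)
    have hc'r : (range c').Countable := by
      have hsub : range c' ⊆ (fun p : ((Fin n → ℝ) × ℕ) × (Fin n → Bool) =>
          child p.1.1 p.1.2 p.2) '' ((range c ×ˢ (univ : Set ℕ)) ×ˢ (univ : Set (Fin n → Bool))) := by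
        rintro _ ⟨x, rfl⟩
        exact ⟨((c x, mfun x), τ x), ⟨⟨mem_range_self x, mem_univ _⟩, mem_univ _⟩, rfl⟩
      exact Set.Countable.mono hsub
        (((hcc.prod (countable_univ)).prod countable_univ).image _)
    refine ⟨c', ⟨hc'm, hc'r, ?_⟩, ?_⟩
    · intro x
      have hx : x ∈ (c ⁻¹' {c x}) ∩ (mfun ⁻¹' {mfun x}) := ⟨rfl, rfl⟩
      have hnot := hσprop (c x) (mfun x) x hx
      obtain ⟨v, hvbox, hvC⟩ := not_mem_badSet_iff.1 hnot
      exact ⟨v, hvC, fun i => hvbox i⟩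
    · intro x i
      have : c' x i - c x i = if τ x i then (mfun x : ℝ)/2^(k+1) else -((mfun x : ℝ)/2^(k+1)) := by
        simp only [c', child]
        by_cases h : τ x i <;> simp [h] <;> ring
      rw [this]
      by_cases h : τ x i <;> simp [h, abs_of_nonneg (hδpos (mfun x)),
        abs_neg, le_refl]
  -- Step 3: build the chain and pass to the limit
  let Chain : (k : ℕ) → {c : X → Fin n → ℝ // Good k c} := fun k =>
    Nat.rec ⟨fun _ _ => 0, hGood0⟩
      (fun k prev => ⟨(hstep k prev.1 prev.2).choose, (hstep k prev.1 prev.2).choose_spec.1⟩) k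
  have hchain_close : ∀ k x i, |(Chain (k+1)).1 x i - (Chain k).1 x i| ≤ (mfun x : ℝ)/2^(k+1) :=
    fun k => (hstep k (Chain k).1 (Chain k).2).choose_spec.2
  have hcauchy : ∀ x, CauchySeq (fun k => (Chain k).1 x) := by
    intro x
    apply cauchySeq_of_le_geometric (1/2 : ℝ) (mfun x : ℝ) (by norm_num)
    intro k
    have hnn : (0:ℝ) ≤ (mfun x : ℝ) * (1/2)^k := by positivity
    rw [dist_pi_le_iff hnn]
    intro i
    rw [Real.dist_eq, abs_sub_comm]
    refine le_trans (hchain_close k x i) ?_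
    rw [div_le_iff₀ (by positivity : (0:ℝ) < 2^(k+1))]
    have : (mfun x : ℝ) * (1/2)^k * 2^(k+1) = (mfun x : ℝ) * 2 := by
      rw [pow_succ]
      field_simp
      rw [mul_assoc, ← mul_pow]; norm_num
    rw [this]
    nlinarith [(Nat.cast_nonneg (mfun x) : (0:ℝ) ≤ (mfun x : ℝ))]
  have hlim : ∀ x, ∃ l, Tendsto (fun k => (Chain k).1 x) atTop (nhds l) :=
    fun x => cauchySeq_tendsto_of_complete (hcauchy x)
  let A : X → Fin n → ℝ := fun x => (hlim x).choose
  have hAten : ∀ x, Tendsto (fun k => (Chain k).1 x) atTop (nhds (A x)) :=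
    fun x => (hlim x).choose_spec
  have hAmeas : Measurable A :=
    measurable_of_tendsto_metrizable (fun k => (Chain k).2.1)
      (tendsto_pi_nhds.2 hAten)
  refine ⟨A, hAmeas, ?_⟩
  intro x y hy
  have key : ∀ γ : ℝ, γ < f x y → γ ≤ dot (A x) y := by
    intro γ hγ
    have hz : ((x, (y, γ)) : X × ((Fin n → ℝ) × ℝ)) ∈ TT Y f := ⟨hy, hγ⟩
    have hvk : ∀ k, ∃ v, inC Y f x v ∧ ∀ i, |v i - (Chain k).1 x i| ≤ (mfun x : ℝ)/2^k :=
      fun k => (Chain k).2.2.2 x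
    choose v hvC hvclose using hvk
    have h1 : ∀ k, γ ≤ dot (v k) y := fun k => hvC k (y, γ) hz
    have h2 : Tendsto v atTop (nhds (A x)) := by
      rw [tendsto_iff_dist_tendsto_zero]
      have hub : ∀ k, dist (v k) (A x) ≤ (mfun x : ℝ)/2^k + dist ((Chain k).1 x) (A x) := by
        intro k
        refine le_trans (dist_triangle (v k) ((Chain k).1 x) (A x)) ?_
        have : dist (v k) ((Chain k).1 x) ≤ (mfun x : ℝ)/2^k := by
          rw [dist_pi_le_iff (by positivity)]
          intro i
          rw [Real.dist_eq]
          exact hvclose k i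
        linarith
      have hlb : ∀ k, (0:ℝ) ≤ dist (v k) (A x) := fun k => dist_nonneg
      have hten : Tendsto (fun k => (mfun x : ℝ)/2^k + dist ((Chain k).1 x) (A x)) atTop
          (nhds 0) := by
        have t1 : Tendsto (fun k : ℕ => (mfun x : ℝ)/2^k) atTop (nhds 0) := by
          have : (fun k : ℕ => (mfun x : ℝ)/2^k) = fun k : ℕ => (mfun x : ℝ) * (1/2)^k := by
            funext k
            rw [div_pow, one_pow]
            ring
          rw [this]
          simpa using (tendsto_pow_atTop_nhds_zero_of_lt_one (by norm_num : (0:ℝ) ≤ 1/2)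
            (by norm_num : (1/2:ℝ) < 1)).const_mul (mfun x : ℝ)
        have t2 : Tendsto (fun k => dist ((Chain k).1 x) (A x)) atTop (nhds 0) :=
          tendsto_iff_dist_tendsto_zero.1 (hAten x)
        simpa using t1.add t2
      exact squeeze_zero hlb hub hten
    have h3 : Tendsto (fun k => dot (v k) y) atTop (nhds (dot (A x) y)) := by
      have hcont : Continuous fun w : Fin n → ℝ => dot w y :=
        continuous_dot.comp (continuous_id.prodMk continuous_const)
      exact (hcont.tendsto (A x)).comp h2
    exact ge_of_tendsto' h3 h1
  by_contra hcon
  push_neg at hcon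
  obtain ⟨γ, hγ1, hγ2⟩ := exists_between hcon
  have hkey := key γ hγ2
  have hd : dot (A x) y = ∑ i, A x i * y i := rfl
  rw [hd] at hkey
  linarith
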